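/- For every real λ > −1/2 and every integer m ≥ 1, lim_{n→∞} (1/(n+1)) Σ_{k=0}^n ( k(2n − k + 2λ − 1) / (4(n+λ−1)(n+λ)) )^m = Γ(3/2) Γ(m+1) / (4^m Γ(m + 3/2)). (Equivalently, the limit equals 2^{−2m−1} ∫_{−1}^1 (1−x²)^m dx.) -/

import Mathlib

open Filter MeasureTheory

lemma npc_point_expand (y x : ℝ) (m : ℕ) : (x*(y-x))^m
    = ∑ j ∈ Finset.range (m+1), ((-1:ℝ)^j * (m.choose j) * y^(m-j)) * x^(m+j) := by
  rw [mul_pow, show y - x = -x + y from by ring, add_pow, Finset.mul_sum]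
  refine Finset.sum_congr rfl fun j hj => ?_
  rw [neg_pow, pow_add]
  ring

lemma npc_expand (y a : ℝ) (m n : ℕ) :
    ∑ k ∈ Finset.range (n+1), ((k:ℝ) * (y - k) / a)^m
      = ∑ j ∈ Finset.range (m+1),
          (((-1:ℝ)^j * (m.choose j) * y^(m-j)) / a^m) * ∑ k ∈ Finset.range (n+1), (k:ℝ)^(m+j) := by
  have h1 : ∀ k : ℕ, ((k:ℝ) * (y - k) / a)^m
      = ∑ j ∈ Finset.range (m+1), (((-1:ℝ)^j * (m.choose j) * y^(m-j)) / a^m) * (k:ℝ)^(m+j) := by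
    intro k
    rw [div_pow, npc_point_expand, Finset.sum_div]
    exact Finset.sum_congr rfl fun j hj => by ring
  simp_rw [h1]
  rw [Finset.sum_comm]
  simp_rw [← Finset.mul_sum]

lemma npc_nat_prod (a n : ℕ) : a.factorial * ∏ j ∈ Finset.range n, (a+1+j) = (a+n).factorial := by
  induction n with
  | zero => simp
  | succ n ih =>
    rw [Finset.prod_range_succ, ← mul_assoc, ih, show a+(n+1) = (a+n)+1 from rfl,
      Nat.factorial_succ]
    ring

lemma npc_gamma_fact (m : ℕ) :
    Real.Gamma ((m:ℝ) + 3/2) * (4^m * m.factorial) = (2*m+1).factorial * Real.Gamma (3/2) := by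
  induction m with
  | zero => norm_num
  | succ m ih =>
    have h : ((m:ℝ)+1) + 3/2 = ((m:ℝ)+3/2) + 1 := by ring
    rw [Nat.cast_succ, h, Real.Gamma_add_one (by positivity)]
    rw [show 2*(m+1)+1 = (2*m+1) + 1 + 1 from by ring, Nat.factorial_succ, Nat.factorial_succ,
      Nat.factorial_succ]
    push_cast
    push_cast at ih
    ring_nf
    ring_nf at ih
    nlinarith [ih]

lemma npc_beta_nat (m : ℕ) : (∫ x in (0:ℝ)..1, x^m * (1-x)^m)
    = (m.factorial : ℝ) * m.factorial / ((2*m+1).factorial : ℝ) := by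
  have hu : 0 < Complex.re ((m:ℂ)+1) := by simp; positivity
  have h1 := Complex.betaIntegral_eval_nat_add_one_right hu m
  have h2 : Complex.betaIntegral ((m:ℂ)+1) ((m:ℂ)+1)
      = ((∫ x in (0:ℝ)..1, x^m * (1-x)^m : ℝ) : ℂ) := by
    rw [Complex.betaIntegral]
    rw [← intervalIntegral.integral_ofReal]
    refine intervalIntegral.integral_congr fun x hx => ?_
    rw [show (m:ℂ)+1-1 = (m:ℂ) from by ring, Complex.cpow_natCast, Complex.cpow_natCast]
    push_cast
    ring
  have h3 : (∏ j ∈ Finset.range (m+1), ((m:ℂ)+1+(j:ℕ)))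
      = ((∏ j ∈ Finset.range (m+1), (m+1+j) : ℕ) : ℂ) := by
    push_cast
    rfl
  have h4 : (m.factorial : ℕ) * ∏ j ∈ Finset.range (m+1), (m+1+j) = (2*m+1).factorial := by
    rw [npc_nat_prod m (m+1), show m+(m+1) = 2*m+1 from by ring]
  have hP : ((∏ j ∈ Finset.range (m+1), (m+1+j) : ℕ) : ℂ) ≠ 0 := by
    norm_cast
    positivity
  rw [h2, h3] at h1
  have := h1
  have h5 : ((∫ x in (0:ℝ)..1, x^m * (1-x)^m : ℝ) : ℂ)
      = ((m.factorial : ℝ) * m.factorial / ((2*m+1).factorial : ℝ) : ℝ) := by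
    rw [this]
    rw [← h4]
    push_cast
    rw [mul_div_mul_left _ _ (show (m.factorial:ℂ) ≠ 0 from by norm_cast; positivity)]
  exact_mod_cast h5

lemma npc_int_expand (m : ℕ) : (∫ x in (0:ℝ)..1, (x*(2-x))^m)
    = ∑ j ∈ Finset.range (m+1), ((-1:ℝ)^j * (m.choose j) * 2^(m-j)) * (1/((m:ℝ)+j+1)) := by
  simp_rw [npc_point_expand 2]
  rw [intervalIntegral.integral_finset_sum (fun j _ =>
    ((by fun_prop : Continuous fun x : ℝ => ((-1:ℝ)^j * (m.choose j) * 2^(m-j)) * x^(m+j)).intervalIntegrable _ _))]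
  refine Finset.sum_congr rfl fun j hj => ?_
  rw [intervalIntegral.integral_const_mul, integral_pow]
  push_cast
  norm_num

lemma npc_int_subst (m : ℕ) : (∫ x in (0:ℝ)..1, (x*(2-x))^m)
    = 4^m * ∫ x in (0:ℝ)..1, x^m * (1-x)^m := by
  have hg : Continuous fun x : ℝ => (x*(1-x))^m := by continuity
  have h1 := intervalIntegral.integral_comp_mul_left
    (a := (0:ℝ)) (b := 1/2) (fun y : ℝ => (y*(2-y))^m) (c := 2) two_ne_zero
  have h2 : (∫ x in (0:ℝ)..(1/2:ℝ), ((2*x)*(2-2*x))^m)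
      = 4^m * ∫ x in (0:ℝ)..(1/2:ℝ), (x*(1-x))^m := by
    rw [← intervalIntegral.integral_const_mul]
    refine intervalIntegral.integral_congr fun x hx => ?_
    rw [← mul_pow]
    ring_nf
  have h3 : (∫ x in (1/2:ℝ)..1, (x*(1-x))^m) = ∫ x in (0:ℝ)..(1/2:ℝ), (x*(1-x))^m := by
    have := intervalIntegral.integral_comp_sub_left (a := (0:ℝ)) (b := 1/2)
      (fun y : ℝ => (y*(1-y))^m) 1
    norm_num at this
    rw [← this]
    refine intervalIntegral.integral_congr fun x hx => ?_
    ring_nf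
  have h4 : (∫ x in (0:ℝ)..1, (x*(1-x))^m)
      = (∫ x in (0:ℝ)..(1/2:ℝ), (x*(1-x))^m) + ∫ x in (1/2:ℝ)..1, (x*(1-x))^m :=
    (intervalIntegral.integral_add_adjacent_intervals
      (hg.intervalIntegrable _ _) (hg.intervalIntegrable _ _)).symm
  have h5 : (∫ x in (0:ℝ)..1, x^m * (1-x)^m) = ∫ x in (0:ℝ)..1, (x*(1-x))^m := by
    refine intervalIntegral.integral_congr fun x hx => ?_
    rw [mul_pow]
  norm_num at h1
  rw [h2] at h1
  rw [h5, h4, h3]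
  linarith

lemma npc_sumpow (p : ℕ) (hp : 1 ≤ p) :
    Tendsto (fun n : ℕ => (∑ k ∈ Finset.range (n+1), (k:ℝ)^p) / (n:ℝ)^(p+1)) atTop
      (nhds (1/((p:ℝ)+1))) := by
  have hmono : ∀ t : ℝ, MonotoneOn (fun x : ℝ => x^p) (Set.Icc 0 t) :=
    fun t x hx y _ hxy => pow_le_pow_left₀ hx.1 hxy p
  have hlow : ∀ n : ℕ, ((n:ℝ)^(p+1))/((p:ℝ)+1) ≤ ∑ k ∈ Finset.range (n+1), (k:ℝ)^p := by
    intro n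
    have h := (hmono ((0:ℝ) + n)).integral_le_sum
    rw [integral_pow] at h
    have h2 : ∑ i ∈ Finset.range n, ((0:ℝ) + ((i+1:ℕ):ℝ))^p
        = ∑ k ∈ Finset.range (n+1), (k:ℝ)^p := by
      rw [Finset.sum_range_succ']
      simp [zero_pow (by omega : p ≠ 0)]
    rw [h2] at h
    calc ((n:ℝ)^(p+1))/((p:ℝ)+1) = (((0:ℝ)+n)^(p+1) - 0^(p+1))/((p:ℝ)+1) := by
          rw [zero_pow (by omega : p+1 ≠ 0)]; push_cast; ring
      _ ≤ _ := by exact_mod_cast h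
  have hup : ∀ n : ℕ, (∑ k ∈ Finset.range (n+1), (k:ℝ)^p) ≤ ((n:ℝ)+1)^(p+1)/((p:ℝ)+1) := by
    intro n
    have h := (hmono ((0:ℝ) + (n+1:ℕ))).sum_le_integral
    rw [integral_pow] at h
    have h2 : ∑ i ∈ Finset.range (n+1), ((0:ℝ) + (i:ℕ))^p
        = ∑ k ∈ Finset.range (n+1), (k:ℝ)^p := by
      refine Finset.sum_congr rfl fun i _ => by rw [zero_add]
    rw [h2] at h
    calc (∑ k ∈ Finset.range (n+1), (k:ℝ)^p) ≤ (((0:ℝ)+(n+1:ℕ))^(p+1) - 0^(p+1))/((p:ℝ)+1) := by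
          exact_mod_cast h
      _ = ((n:ℝ)+1)^(p+1)/((p:ℝ)+1) := by
          rw [zero_pow (by omega : p+1 ≠ 0)]; push_cast; ring
  have hp1 : (0:ℝ) < (p:ℝ)+1 := by positivity
  have hh1 : Tendsto (fun n : ℕ => ((1:ℝ) + 1/(n:ℝ))) atTop (nhds 1) := by
    have := (tendsto_const_nhds (x := (1:ℝ)) (f := (atTop : Filter ℕ))).add
      tendsto_one_div_atTop_nhds_zero_nat
    simpa using this
  have hh : Tendsto (fun n : ℕ => (1+1/(n:ℝ))^(p+1) * (1/((p:ℝ)+1))) atTop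
      (nhds (1/((p:ℝ)+1))) := by
    have := (hh1.pow (p+1)).mul_const (1/((p:ℝ)+1))
    simpa using this
  refine tendsto_of_tendsto_of_tendsto_of_le_of_le'
    (tendsto_const_nhds : Tendsto (fun _ : ℕ => 1/((p:ℝ)+1)) atTop _)
    hh ?_ ?_
  · filter_upwards [eventually_ge_atTop 1] with n hn
    have hnp : (0:ℝ) < (n:ℝ)^(p+1) := by positivity
    rw [le_div_iff₀ hnp]
    calc 1/((p:ℝ)+1) * (n:ℝ)^(p+1) = ((n:ℝ)^(p+1))/((p:ℝ)+1) := by ring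
      _ ≤ _ := hlow n
  · filter_upwards [eventually_ge_atTop 1] with n hn
    have hn0 : (n:ℝ) ≠ 0 := by positivity
    have hnp : (0:ℝ) < (n:ℝ)^(p+1) := by positivity
    rw [div_le_iff₀ hnp]
    calc (∑ k ∈ Finset.range (n+1), (k:ℝ)^p) ≤ ((n:ℝ)+1)^(p+1)/((p:ℝ)+1) := hup n
      _ = (1+1/(n:ℝ))^(p+1) * (1/((p:ℝ)+1)) * (n:ℝ)^(p+1) := by
          rw [show (1+1/(n:ℝ))^(p+1) * (1/((p:ℝ)+1)) * (n:ℝ)^(p+1)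
              = ((1+1/(n:ℝ))*(n:ℝ))^(p+1) * (1/((p:ℝ)+1)) from by rw [mul_pow]; ring,
            show (1+1/(n:ℝ))*(n:ℝ) = (n:ℝ)+1 from by field_simp]
          ring

lemma npc_term (lam : ℝ) (m j : ℕ) (hm : 1 ≤ m) (hj : j ≤ m) :
    Tendsto (fun n : ℕ => (1/((n:ℝ)+1)) *
      ((((-1:ℝ)^j * (m.choose j) * (2*(n:ℝ)+2*lam-1)^(m-j))
        / (4*((n:ℝ)+lam-1)*((n:ℝ)+lam))^m) * ∑ k ∈ Finset.range (n+1), (k:ℝ)^(m+j)))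
      atTop
      (nhds (((-1:ℝ)^j * (m.choose j) * 2^(m-j)) * (1/((m:ℝ)+(j:ℝ)+1)) / 4^m)) := by
  have hone : Tendsto (fun n : ℕ => 1/(n:ℝ)) atTop (nhds 0) := tendsto_one_div_atTop_nhds_zero_nat
  -- u_n = Y_n / n → 2
  have hu : Tendsto (fun n : ℕ => (2*(n:ℝ)+2*lam-1)/(n:ℝ)) atTop (nhds 2) := by
    have h0 : Tendsto (fun n : ℕ => 2 + (2*lam-1)*(1/(n:ℝ))) atTop (nhds 2) := by
      have := (tendsto_const_nhds (x := (2:ℝ)) (f := (atTop : Filter ℕ))).add (hone.const_mul (2*lam-1))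
      simpa using this
    refine h0.congr' ?_
    filter_upwards [eventually_ge_atTop 1] with n hn
    have hn0 : (n:ℝ) ≠ 0 := by positivity
    field_simp
    ring
  -- v_n = n^2 / a_n → 1/4
  have hv : Tendsto (fun n : ℕ => (n:ℝ)^2/(4*((n:ℝ)+lam-1)*((n:ℝ)+lam))) atTop (nhds (1/4)) := by
    have hden : Tendsto (fun n : ℕ => (4*((n:ℝ)+lam-1)*((n:ℝ)+lam))/(n:ℝ)^2) atTop (nhds 4) := by
      have h0 : Tendsto (fun n : ℕ => 4*(1+(lam-1)*(1/(n:ℝ)))*(1+lam*(1/(n:ℝ)))) atTop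
          (nhds 4) := by
        have := ((tendsto_const_nhds (x := (4:ℝ)) (f := (atTop : Filter ℕ))).mul
          ((tendsto_const_nhds (x := (1:ℝ)) (f := (atTop : Filter ℕ))).add (hone.const_mul (lam-1)))).mul
          ((tendsto_const_nhds (x := (1:ℝ)) (f := (atTop : Filter ℕ))).add (hone.const_mul lam))
        simpa using this
      refine h0.congr' ?_
      filter_upwards [eventually_ge_atTop 1] with n hn
      have hn0 : (n:ℝ) ≠ 0 := by positivity
      field_simp
      ring
    have h1 : Tendsto (fun n : ℕ => 1/((4*((n:ℝ)+lam-1)*((n:ℝ)+lam))/(n:ℝ)^2)) atTop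
        (nhds (1/4)) := tendsto_const_nhds.div hden (by norm_num)
    exact Tendsto.congr (fun n => one_div_div _ _) h1
  -- r_n = n/(n+1) → 1
  have hr : Tendsto (fun n : ℕ => (n:ℝ)/((n:ℝ)+1)) atTop (nhds 1) := by
    have hden : Tendsto (fun n : ℕ => ((n:ℝ)+1)/(n:ℝ)) atTop (nhds 1) := by
      have h0 : Tendsto (fun n : ℕ => 1 + 1/(n:ℝ)) atTop (nhds 1) := by
        have := (tendsto_const_nhds (x := (1:ℝ)) (f := (atTop : Filter ℕ))).add hone
        simpa using this
      refine h0.congr' ?_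
      filter_upwards [eventually_ge_atTop 1] with n hn
      have hn0 : (n:ℝ) ≠ 0 := by positivity
      field_simp
    have h1 : Tendsto (fun n : ℕ => 1/(((n:ℝ)+1)/(n:ℝ))) atTop (nhds (1/1)) :=
      tendsto_const_nhds.div hden one_ne_zero
    rw [show (1:ℝ)/1 = 1 from by norm_num] at h1
    exact Tendsto.congr (fun n => one_div_div _ _) h1
  have hw := npc_sumpow (m+j) (le_trans hm (Nat.le_add_right m j))
  -- full product
  have hT : Tendsto (fun n : ℕ => ((-1:ℝ)^j * (m.choose j)) *
      (((2*(n:ℝ)+2*lam-1)/(n:ℝ))^(m-j) * (((n:ℝ)^2/(4*((n:ℝ)+lam-1)*((n:ℝ)+lam)))^m *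
        (((∑ k ∈ Finset.range (n+1), (k:ℝ)^(m+j)) / (n:ℝ)^(m+j+1)) * ((n:ℝ)/((n:ℝ)+1))))))
      atTop
      (nhds (((-1:ℝ)^j * (m.choose j)) * (2^(m-j) * ((1/4)^m * ((1/((m:ℝ)+(j:ℝ)+1)) * 1))))) := by
    have := ((hu.pow (m-j)).mul ((hv.pow m).mul (hw.mul hr))).const_mul
      ((-1:ℝ)^j * (m.choose j))
    norm_num at this ⊢
    convert this using 2 <;> (push_cast; ring)
  have heq : ∀ᶠ n : ℕ in atTop, ((-1:ℝ)^j * (m.choose j)) *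
      (((2*(n:ℝ)+2*lam-1)/(n:ℝ))^(m-j) * (((n:ℝ)^2/(4*((n:ℝ)+lam-1)*((n:ℝ)+lam)))^m *
        (((∑ k ∈ Finset.range (n+1), (k:ℝ)^(m+j)) / (n:ℝ)^(m+j+1)) * ((n:ℝ)/((n:ℝ)+1)))))
      = (1/((n:ℝ)+1)) *
      ((((-1:ℝ)^j * (m.choose j) * (2*(n:ℝ)+2*lam-1)^(m-j))
        / (4*((n:ℝ)+lam-1)*((n:ℝ)+lam))^m) * ∑ k ∈ Finset.range (n+1), (k:ℝ)^(m+j)) := by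
    have h1 : ∀ᶠ n : ℕ in atTop, (1:ℝ) - lam < (n:ℝ) :=
      tendsto_natCast_atTop_atTop.eventually_gt_atTop _
    have h2 : ∀ᶠ n : ℕ in atTop, -lam < (n:ℝ) :=
      tendsto_natCast_atTop_atTop.eventually_gt_atTop _
    filter_upwards [eventually_ge_atTop 1, h1, h2] with n hn hn1 hn2
    have hn0 : (n:ℝ) ≠ 0 := by positivity
    have ha1 : (n:ℝ)+lam-1 ≠ 0 := by nlinarith
    have ha2 : (n:ℝ)+lam ≠ 0 := by nlinarith
    have hnp1 : (n:ℝ)+1 ≠ 0 := by positivity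
    obtain ⟨d, rfl⟩ : ∃ d, m = j + d := ⟨m - j, by omega⟩
    simp only [Nat.add_sub_cancel_left]
    rw [div_pow, div_pow]
    field_simp
    ring
  have final := hT.congr' heq
  convert final using 2
  norm_num
  simp only [one_div, inv_pow]
  ring

theorem stmt9 (lam : ℝ) (hlam : -(1/2) < lam) (m : ℕ) (hm : 1 ≤ m) :
    Filter.Tendsto (fun n : ℕ => (1/((n:ℝ)+1)) * ∑ k ∈ Finset.range (n+1),
      (((k:ℝ) * (2*(n:ℝ) - (k:ℝ) + 2*lam - 1)) / (4*((n:ℝ)+lam-1)*((n:ℝ)+lam)))^m)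
      Filter.atTop
      (nhds (Real.Gamma (3/2) * Real.Gamma ((m:ℝ)+1) / (4^m * Real.Gamma ((m:ℝ)+3/2)))) := by
  -- rewrite the function as a finite sum of terms
  have hfun : ∀ n : ℕ, (1/((n:ℝ)+1)) * ∑ k ∈ Finset.range (n+1),
      (((k:ℝ) * (2*(n:ℝ) - (k:ℝ) + 2*lam - 1)) / (4*((n:ℝ)+lam-1)*((n:ℝ)+lam)))^m
      = ∑ j ∈ Finset.range (m+1), (1/((n:ℝ)+1)) *
        ((((-1:ℝ)^j * (m.choose j) * (2*(n:ℝ)+2*lam-1)^(m-j))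
          / (4*((n:ℝ)+lam-1)*((n:ℝ)+lam))^m) * ∑ k ∈ Finset.range (n+1), (k:ℝ)^(m+j)) := by
    intro n
    rw [← Finset.mul_sum, ← npc_expand (2*(n:ℝ)+2*lam-1) (4*((n:ℝ)+lam-1)*((n:ℝ)+lam)) m n]
    congr 1
    refine Finset.sum_congr rfl fun k _ => ?_
    congr 2
    ring
  -- limit of the sum of terms
  have hsum : Tendsto (fun n : ℕ => ∑ j ∈ Finset.range (m+1), (1/((n:ℝ)+1)) *
        ((((-1:ℝ)^j * (m.choose j) * (2*(n:ℝ)+2*lam-1)^(m-j))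
          / (4*((n:ℝ)+lam-1)*((n:ℝ)+lam))^m) * ∑ k ∈ Finset.range (n+1), (k:ℝ)^(m+j)))
      atTop (nhds (∑ j ∈ Finset.range (m+1),
        (((-1:ℝ)^j * (m.choose j) * 2^(m-j)) * (1/((m:ℝ)+(j:ℝ)+1)) / 4^m))) :=
    tendsto_finset_sum _ fun j hj =>
      npc_term lam m j hm (Nat.lt_succ_iff.mp (Finset.mem_range.mp hj))
  -- identify the limit value
  have hval : (∑ j ∈ Finset.range (m+1),
        (((-1:ℝ)^j * (m.choose j) * 2^(m-j)) * (1/((m:ℝ)+(j:ℝ)+1)) / 4^m))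
      = Real.Gamma (3/2) * Real.Gamma ((m:ℝ)+1) / (4^m * Real.Gamma ((m:ℝ)+3/2)) := by
    have h4 : (0:ℝ) < 4^m := by positivity
    have hA : (∑ j ∈ Finset.range (m+1),
        (((-1:ℝ)^j * (m.choose j) * 2^(m-j)) * (1/((m:ℝ)+(j:ℝ)+1)) / 4^m))
        = (∑ j ∈ Finset.range (m+1),
          (((-1:ℝ)^j * (m.choose j) * 2^(m-j)) * (1/((m:ℝ)+(j:ℝ)+1)))) / 4^m := by
      rw [Finset.sum_div]
    rw [hA, ← npc_int_expand m, npc_int_subst m, npc_beta_nat m]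
    have hG32 : (0:ℝ) < Real.Gamma (3/2) := Real.Gamma_pos_of_pos (by norm_num)
    have hGm : (0:ℝ) < Real.Gamma ((m:ℝ)+3/2) := Real.Gamma_pos_of_pos (by positivity)
    have hfact : (0:ℝ) < ((2*m+1).factorial : ℝ) := by exact_mod_cast (2*m+1).factorial_pos
    have h1 : Real.Gamma ((m:ℝ)+1) = (m.factorial : ℝ) := by
      exact_mod_cast Real.Gamma_nat_eq_factorial m
    rw [h1]
    have key : (m.factorial:ℝ) * m.factorial / ((2*m+1).factorial:ℝ)
        = Real.Gamma (3/2) * (m.factorial:ℝ) / (4 ^ m * Real.Gamma ((m:ℝ) + 3/2)) := by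
      rw [div_eq_div_iff (ne_of_gt hfact) (by positivity)]
      linear_combination ((m.factorial : ℝ)) * npc_gamma_fact m
    rw [← key]
    field_simp
  rw [← hval]
  exact hsum.congr fun n => (hfun n).symm
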